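/- arXiv:1908.03551 — 2 statements merged into one kernel-verified Lean document; each statement's English description precedes it below -/
import Mathlib

section
/- For every regular expression E over Σ, the trace-closing semantics equals the trace closure of the standard language: ⟦E⟧^I = [⟦E⟧]; in particular, ⟦E⟧^I is trace closed (closed under ∼). -/
open RegularExpression
open scoped Classical

universe u

variable {α : Type u}

/-- Two words are independent if every letter of the first is independent
of every letter of the second. -/
def WIndep (I : α → α → Prop) (u v : List α) : Prop :=
  ∀ a ∈ u, ∀ b ∈ v, I a b

/-- Trace equivalence: the least equivalence relation on words containing
all pairs (x ++ [a,b] ++ y, x ++ [b,a] ++ y) with a I b. -/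
inductive TrEq (I : α → α → Prop) : List α → List α → Prop
  | swap (x y : List α) {a b : α} : I a b → TrEq I (x ++ [a, b] ++ y) (x ++ [b, a] ++ y)
  | refl (u : List α) : TrEq I u u
  | symm {u v : List α} : TrEq I u v → TrEq I v u
  | trans {u v w : List α} : TrEq I u v → TrEq I v w → TrEq I u w

/-- Trace closure of a language. -/
def TrClosure (I : α → α → Prop) (L : Set (List α)) : Set (List α) :=
  {w | ∃ z ∈ L, TrEq I w z}

/-- u ⊲ z ⊳ v with exactly n blocks of u: there are nonempty words u₁,…,uₙ and
words v₀,…,vₙ (with v₁,…,v_{n-1} nonempty) such that u = u₁⋯uₙ, v = v₀⋯vₙ,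
z = v₀u₁v₁⋯uₙvₙ and vⱼ I uᵢ whenever j < i. -/
def ScatN (I : α → α → Prop) (n : ℕ) (u z v : List α) : Prop :=
  ∃ us vs : ℕ → List α,
    (∀ i, 1 ≤ i → i ≤ n → us i ≠ []) ∧
    (∀ j, 1 ≤ j → j ≤ n - 1 → vs j ≠ []) ∧
    u = ((List.range n).map (fun i => us (i + 1))).flatten ∧
    v = ((List.range (n + 1)).map vs).flatten ∧
    z = vs 0 ++ ((List.range n).map (fun i => us (i + 1) ++ vs (i + 1))).flatten ∧
    (∀ i j, 1 ≤ i → i ≤ n → j < i → WIndep I (vs j) (us i))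

/-- u ⊲ z ⊳ v -/
def Scat (I : α → α → Prop) (u z v : List α) : Prop :=
  ∃ n, ScatN I n u z v

/-- u ∼⊲ z ⊳ v -/
def EqScat (I : α → α → Prop) (u z v : List α) : Prop :=
  ∃ u', TrEq I u u' ∧ Scat I u' z v

/-- u ∼⊲ z ⊳∼ v -/
def EqScatEq (I : α → α → Prop) (u z v : List α) : Prop :=
  ∃ u' v', TrEq I u u' ∧ Scat I u' z v' ∧ TrEq I v' v

/-- u ∼⊲_N z ⊳∼ v : as EqScatEq, with the number of blocks bounded by N -/
def EqScatEqLe (I : α → α → Prop) (N : ℕ) (u z v : List α) : Prop :=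
  ∃ u' v', TrEq I u u' ∧ (∃ n ≤ N, ScatN I n u' z v') ∧ TrEq I v' v

/-- Reordering concatenation of words. -/
def rconc (I : α → α → Prop) : List α → List α → Set (List α)
  | [], v => {v}
  | a :: u, [] => {a :: u}
  | a :: u, b :: v =>
      (List.cons a) '' rconc I u (b :: v) ∪
      {z | WIndep I (a :: u) [b] ∧ ∃ w ∈ rconc I (a :: u) v, z = b :: w}
termination_by u v => u.length + v.length

/-- Reordering concatenation lifted to languages. -/
def rconcL (I : α → α → Prop) (L L' : Set (List α)) : Set (List α) :=
  {z | ∃ u ∈ L, ∃ v ∈ L', z ∈ rconc I u v}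

/-- The reorderable part of a language w.r.t. a word. -/
def RPart (I : α → α → Prop) (u : List α) (L : Set (List α)) : Set (List α) :=
  {v ∈ L | WIndep I v u}

/-- The reordering derivative of a language along a word. -/
def RDeriv (I : α → α → Prop) (u : List α) (L : Set (List α)) : Set (List α) :=
  {v | ∃ z ∈ L, EqScat I u z v}

/-- Syntactic reorderable part of a regexp w.r.t. a letter. -/
noncomputable def Rexp (I : α → α → Prop) (a : α) : RegularExpression α → RegularExpression α
  | zero => zero
  | epsilon => epsilon
  | char b => if I a b then char b else zero
  | plus E F => plus (Rexp I a E) (Rexp I a F)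
  | comp E F => comp (Rexp I a E) (Rexp I a F)
  | RegularExpression.star E => star (Rexp I a E)

/-- Brzozowski reordering derivative of a regexp along a letter. -/
noncomputable def Dexp (I : α → α → Prop) (a : α) : RegularExpression α → RegularExpression α
  | zero => zero
  | epsilon => zero
  | char b => if a = b then epsilon else zero
  | plus E F => plus (Dexp I a E) (Dexp I a F)
  | comp E F => plus (comp (Dexp I a E) F) (comp (Rexp I a E) (Dexp I a F))
  | RegularExpression.star E => comp (star (Rexp I a E)) (comp (Dexp I a E) (star E))

/-- Syntactic reorderable part along a word. -/
noncomputable def RexpW (I : α → α → Prop) (u : List α) (E : RegularExpression α) :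
    RegularExpression α :=
  u.foldl (fun E a => Rexp I a E) E

/-- Brzozowski reordering derivative along a word. -/
noncomputable def DexpW (I : α → α → Prop) (u : List α) (E : RegularExpression α) :
    RegularExpression α :=
  u.foldl (fun E a => Dexp I a E) E

/-- Antimirov reordering parts-of-derivatives along a letter. -/
inductive Antim (I : α → α → Prop) : RegularExpression α → α → RegularExpression α → Prop
  | chr (a : α) : Antim I (char a) a epsilon
  | plusL {E F : RegularExpression α} {a E'} : Antim I E a E' → Antim I (plus E F) a E'
  | plusR {E F : RegularExpression α} {a F'} : Antim I F a F' → Antim I (plus E F) a F'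
  | compL {E F : RegularExpression α} {a E'} : Antim I E a E' → Antim I (comp E F) a (comp E' F)
  | compR {E F : RegularExpression α} {a F'} :
      Antim I F a F' → Antim I (comp E F) a (comp (Rexp I a E) F')
  | st {E : RegularExpression α} {a E'} :
      Antim I E a E' → Antim I (star E) a (comp (star (Rexp I a E)) (comp E' (star E)))

/-- Antimirov reordering parts-of-derivatives along a word. -/
inductive AntimW (I : α → α → Prop) : RegularExpression α → List α → RegularExpression α → Prop
  | nil (E : RegularExpression α) : AntimW I E [] E
  | snoc {E : RegularExpression α} {u E' a E''} :
      AntimW I E u E' → Antim I E' a E'' → AntimW I E (u ++ [a]) E''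

/-- The dependence graph of a word: vertices are positions; distinct positions
are adjacent when their letters are not independent. -/
def depGraph (I : α → α → Prop) (w : List α) : SimpleGraph (Fin w.length) where
  Adj i j := i ≠ j ∧ ¬(I (w.get i) (w.get j) ∧ I (w.get j) (w.get i))
  symm := by
    constructor
    intro i j h
    exact ⟨h.1.symm, fun hc => h.2 ⟨hc.2, hc.1⟩⟩
  loopless := by
    constructor
    intro i h
    exact h.1 rfl

/-- A word is connected if its dependence graph is connected. -/
def WordConnected (I : α → α → Prop) (w : List α) : Prop :=
  (depGraph I w).Preconnected

/-- Least fixed point star for the trace-closing semantics. -/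
def starI (I : α → α → Prop) (L : Set (List α)) : Set (List α) :=
  sInf {X | {([] : List α)} ∪ rconcL I L X ⊆ X}

/-- Trace-closing semantics of regular expressions. -/
def langI (I : α → α → Prop) : RegularExpression α → Set (List α)
  | zero => ∅
  | epsilon => {[]}
  | char a => {[a]}
  | plus E F => langI I E ∪ langI I F
  | comp E F => rconcL I (langI I E) (langI I F)
  | RegularExpression.star E => starI I (langI I E)

/-- L has (scattering) rank at most N. -/
def HasRankLe (I : α → α → Prop) (L : Set (List α)) (N : ℕ) : Prop :=
  ∀ u v, u ++ v ∈ TrClosure I L → ∃ z ∈ L, EqScatEqLe I N u z v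

/-- L has uniform (scattering) rank at most N. -/
def HasUniformRankLe (I : α → α → Prop) (L : Set (List α)) (N : ℕ) : Prop :=
  ∀ w ∈ TrClosure I L, ∃ z ∈ L, ∀ u v, w = u ++ v → EqScatEqLe I N u z v

/-- Star-connected regular expressions. -/
inductive StarConnected (I : α → α → Prop) : RegularExpression α → Prop
  | zero : StarConnected I zero
  | epsilon : StarConnected I epsilon
  | chr (a : α) : StarConnected I (char a)
  | plus {E F : RegularExpression α} :
      StarConnected I E → StarConnected I F → StarConnected I (plus E F)
  | comp {E F : RegularExpression α} :
      StarConnected I E → StarConnected I F → StarConnected I (comp E F)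
  | st {E : RegularExpression α} :
      StarConnected I E → (∀ w ∈ E.matches', WordConnected I w) → StarConnected I (star E)

/-- Refined Antimirov reordering parts-of-derivatives along a letter. -/
inductive RAntim (I : α → α → Prop) :
    RegularExpression α → α → RegularExpression α → RegularExpression α → Prop
  | chr (a : α) : RAntim I (char a) a epsilon epsilon
  | plusL {E F : RegularExpression α} {a El Er} :
      RAntim I E a El Er → RAntim I (plus E F) a El Er
  | plusR {E F : RegularExpression α} {a Fl Fr} :
      RAntim I F a Fl Fr → RAntim I (plus E F) a Fl Fr
  | compL {E F : RegularExpression α} {a El Er} :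
      RAntim I E a El Er → RAntim I (comp E F) a El (comp Er F)
  | compR {E F : RegularExpression α} {a Fl Fr} :
      RAntim I F a Fl Fr → RAntim I (comp E F) a (comp (Rexp I a E) Fl) Fr
  | st {E : RegularExpression α} {a El Er} :
      RAntim I E a El Er →
      RAntim I (star E) a (comp (star (Rexp I a E)) El) (comp Er (star E))

/-- Refined Antimirov relation lifted to nonempty lists of regexps (unbounded). -/
inductive RAntimL (I : α → α → Prop) :
    List (RegularExpression α) → α → List (RegularExpression α) → Prop
  | split {Γ Δ : List (RegularExpression α)} {E : RegularExpression α} {a El Er} :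
      RAntim I E a El Er →
      RAntimL I (Γ ++ E :: Δ) a (Γ.map (Rexp I a) ++ El :: Er :: Δ)
  | dropL {Γ Δ : List (RegularExpression α)} {E : RegularExpression α} {a El Er} :
      RAntim I E a El Er → [] ∈ El.matches' → Γ ≠ [] →
      RAntimL I (Γ ++ E :: Δ) a (Γ.map (Rexp I a) ++ Er :: Δ)
  | dropR {Γ Δ : List (RegularExpression α)} {E : RegularExpression α} {a El Er} :
      RAntim I E a El Er → [] ∈ Er.matches' → Δ ≠ [] →
      RAntimL I (Γ ++ E :: Δ) a (Γ.map (Rexp I a) ++ El :: Δ)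
  | dropBoth {Γ Δ : List (RegularExpression α)} {E : RegularExpression α} {a El Er} :
      RAntim I E a El Er → [] ∈ El.matches' → [] ∈ Er.matches' → Γ ≠ [] → Δ ≠ [] →
      RAntimL I (Γ ++ E :: Δ) a (Γ.map (Rexp I a) ++ Δ)

/-- Refined Antimirov relation along a word (unbounded). -/
inductive RAntimW (I : α → α → Prop) :
    RegularExpression α → List α → List (RegularExpression α) → Prop
  | nil (E : RegularExpression α) : RAntimW I E [] [E]
  | snoc {E : RegularExpression α} {u Γ a Γ'} :
      RAntimW I E u Γ → RAntimL I Γ a Γ' → RAntimW I E (u ++ [a]) Γ'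

/-- N-bounded refined Antimirov relation lifted to nonempty lists of regexps. -/
inductive RAntimLN (I : α → α → Prop) (N : ℕ) :
    List (RegularExpression α) → α → List (RegularExpression α) → Prop
  | split {Γ Δ : List (RegularExpression α)} {E : RegularExpression α} {a El Er} :
      RAntim I E a El Er → Γ.length + Δ.length < N →
      RAntimLN I N (Γ ++ E :: Δ) a (Γ.map (Rexp I a) ++ El :: Er :: Δ)
  | dropL {Γ Δ : List (RegularExpression α)} {E : RegularExpression α} {a El Er} :
      RAntim I E a El Er → [] ∈ El.matches' → Γ ≠ [] →
      RAntimLN I N (Γ ++ E :: Δ) a (Γ.map (Rexp I a) ++ Er :: Δ)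
  | dropR {Γ Δ : List (RegularExpression α)} {E : RegularExpression α} {a El Er} :
      RAntim I E a El Er → [] ∈ Er.matches' → Δ ≠ [] →
      RAntimLN I N (Γ ++ E :: Δ) a (Γ.map (Rexp I a) ++ El :: Δ)
  | dropBoth {Γ Δ : List (RegularExpression α)} {E : RegularExpression α} {a El Er} :
      RAntim I E a El Er → [] ∈ El.matches' → [] ∈ Er.matches' → Γ ≠ [] → Δ ≠ [] →
      RAntimLN I N (Γ ++ E :: Δ) a (Γ.map (Rexp I a) ++ Δ)

/-- N-bounded refined Antimirov relation along a word. -/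
inductive RAntimWN (I : α → α → Prop) (N : ℕ) :
    RegularExpression α → List α → List (RegularExpression α) → Prop
  | nil (E : RegularExpression α) : RAntimWN I N E [] [E]
  | snoc {E : RegularExpression α} {u Γ a Γ'} :
      RAntimWN I N E u Γ → RAntimLN I N Γ a Γ' → RAntimWN I N E (u ++ [a]) Γ'


open scoped Computability

section Dev
variable {α : Type u} {I : α → α → Prop}

theorem treq_perm {u v : List α} (h : TrEq I u v) : u.Perm v := by
  induction h with
  | swap x y hab => simpa using List.Perm.append_left x (List.Perm.swap _ _ y)
  | refl => exact List.Perm.refl _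
  | symm _ ih => exact ih.symm
  | trans _ _ ih1 ih2 => exact ih1.trans ih2

theorem treq_nil {z : List α} (h : TrEq I z []) : z = [] :=
  (treq_perm h).eq_nil

theorem treq_singleton {z : List α} {a : α} (h : TrEq I z [a]) : z = [a] :=
  List.perm_singleton.mp (treq_perm h)

theorem treq_cons (c : α) {u v : List α} (h : TrEq I u v) : TrEq I (c :: u) (c :: v) := by
  induction h with
  | swap x y hab => exact TrEq.swap (c :: x) y hab
  | refl => exact TrEq.refl _
  | symm _ ih => exact ih.symm
  | trans _ _ ih1 ih2 => exact ih1.trans ih2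

theorem treq_append_left (w : List α) {u v : List α} (h : TrEq I u v) :
    TrEq I (w ++ u) (w ++ v) := by
  induction w with
  | nil => exact h
  | cons c w ih => exact treq_cons c ih

theorem treq_append_right (w : List α) {u v : List α} (h : TrEq I u v) :
    TrEq I (u ++ w) (v ++ w) := by
  induction h with
  | swap x y hab => simpa [List.append_assoc] using TrEq.swap x (y ++ w) hab
  | refl => exact TrEq.refl _
  | symm _ ih => exact ih.symm
  | trans _ _ ih1 ih2 => exact ih1.trans ih2

theorem treq_append {u u' v v' : List α} (h1 : TrEq I u u') (h2 : TrEq I v v') :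
    TrEq I (u ++ v) (u' ++ v') :=
  (treq_append_right v h1).trans (treq_append_left u' h2)

theorem treq_move (hsym : Symmetric I) {u : List α} {b : α} (h : ∀ c ∈ u, I c b)
    (v : List α) : TrEq I (b :: (u ++ v)) (u ++ b :: v) := by
  induction u with
  | nil => exact TrEq.refl _
  | cons c u ih =>
    have h1 : TrEq I (b :: c :: (u ++ v)) (c :: b :: (u ++ v)) :=
      TrEq.swap [] (u ++ v) (hsym (h c (by simp)))
    exact h1.trans (treq_cons c (ih fun x hx => h x (by simp [hx])))

theorem rconc_nil_left (v : List α) : rconc I [] v = {v} := by simp [rconc]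

theorem rconc_nil_right (u : List α) : rconc I u [] = {u} := by
  cases u <;> simp [rconc]

theorem rconc_cons_left {u v z : List α} (c : α) (h : z ∈ rconc I u v) :
    c :: z ∈ rconc I (c :: u) v := by
  cases v with
  | nil =>
    rw [rconc_nil_right] at h; subst h; rw [rconc_nil_right]; rfl
  | cons b v =>
    rw [rconc]; exact Or.inl ⟨z, h, rfl⟩

theorem rconc_cons_right {u v z : List α} {b : α} (hb : ∀ a ∈ u, I a b)
    (h : z ∈ rconc I u v) : b :: z ∈ rconc I u (b :: v) := by
  cases u with
  | nil =>
    rw [rconc_nil_left] at h; subst h; rw [rconc_nil_left]; rfl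
  | cons a u =>
    rw [rconc]
    refine Or.inr ⟨?_, z, h, rfl⟩
    intro x hx y hy
    rw [List.mem_singleton] at hy; subst hy
    exact hb x hx

theorem append_mem_rconc (u v : List α) : u ++ v ∈ rconc I u v := by
  induction u with
  | nil => rw [rconc_nil_left]; rfl
  | cons a u ih => exact rconc_cons_left a ih

theorem rconc_treq (hsym : Symmetric I) :
    ∀ u v z : List α, z ∈ rconc I u v → TrEq I z (u ++ v)
  | [], v, z, h => by rw [rconc_nil_left] at h; subst h; exact TrEq.refl _
  | a :: u, [], z, h => by
      rw [rconc_nil_right] at h; subst h; simpa using TrEq.refl _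
  | a :: u, b :: v, z, h => by
      rw [rconc] at h
      rcases h with ⟨w, hw, rfl⟩ | ⟨hind, w, hw, rfl⟩
      · exact treq_cons a (rconc_treq hsym u (b :: v) w hw)
      · have h1 : TrEq I (b :: w) (b :: ((a :: u) ++ v)) :=
          treq_cons b (rconc_treq hsym (a :: u) v w hw)
        refine h1.trans ?_
        exact treq_move hsym (fun c hc => hind c hc b (by simp)) v
termination_by u v => u.length + v.length

theorem rconc_swap {a b : α} (hab : I a b) :
    ∀ x : List α, ∀ {u v y : List α}, x ++ a :: b :: y ∈ rconc I u v →
      ∃ u' v', TrEq I u u' ∧ TrEq I v v' ∧ x ++ b :: a :: y ∈ rconc I u' v' := by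
  intro x
  induction x with
  | nil =>
    intro u v y h
    cases u with
    | nil =>
      rw [rconc_nil_left] at h
      refine ⟨[], b :: a :: y, TrEq.refl _, ?_, by rw [rconc_nil_left]; rfl⟩
      rw [← h]; exact TrEq.swap [] y hab
    | cons a0 u0 =>
      cases v with
      | nil =>
        rw [rconc_nil_right] at h
        refine ⟨b :: a :: y, [], ?_, TrEq.refl _, by rw [rconc_nil_right]; rfl⟩
        rw [← h]; exact TrEq.swap [] y hab
      | cons b0 v0 =>
        rw [rconc] at h
        rcases h with ⟨w, hw, hz⟩ | ⟨hind, w, hw, hz⟩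
        · simp only [List.nil_append, List.cons.injEq] at hz
          obtain ⟨rfl, rfl⟩ := hz
          cases u0 with
          | nil =>
            rw [rconc_nil_left, Set.mem_singleton_iff] at hw
            injection hw with h1 h2
            subst h1; subst h2
            refine ⟨[a0], b :: y, TrEq.refl _, TrEq.refl _, ?_⟩
            refine rconc_cons_right (fun c hc => ?_) (rconc_cons_left a0 ?_)
            · rw [List.mem_singleton] at hc; subst hc; exact hab
            · rw [rconc_nil_left]; rfl
          | cons a1 u1 =>
            rw [rconc] at hw
            rcases hw with ⟨w1, hw1, hz1⟩ | ⟨hind1, w1, hw1, hz1⟩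
            · injection hz1 with h1 h2
              subst h1; subst h2
              refine ⟨a1 :: a0 :: u1, b0 :: v0, ?_, TrEq.refl _, ?_⟩
              · exact TrEq.swap [] u1 hab
              · exact rconc_cons_left a1 (rconc_cons_left a0 hw1)
            · injection hz1 with h1 h2
              subst h1; subst h2
              refine ⟨a0 :: a1 :: u1, b :: v0, TrEq.refl _, TrEq.refl _, ?_⟩
              refine rconc_cons_right (fun c hc => ?_) (rconc_cons_left a0 hw1)
              rcases List.mem_cons.mp hc with rfl | hc
              · exact hab
              · exact hind1 c hc b (by simp)
        · simp only [Set.mem_setOf_eq, List.nil_append, List.cons.injEq] at hz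
          obtain ⟨rfl, rfl⟩ := hz
          cases v0 with
          | nil =>
            rw [rconc_nil_right, Set.mem_singleton_iff] at hw
            injection hw with h1 h2
            subst h1; subst h2
            refine ⟨b :: y, [a], TrEq.refl _, TrEq.refl _, ?_⟩
            refine rconc_cons_left b (rconc_cons_right (fun c hc => ?_) ?_)
            · exact hind c (by simp [hc]) a (by simp)
            · rw [rconc_nil_right]; rfl
          | cons b1 v1 =>
            rw [rconc] at hw
            rcases hw with ⟨w1, hw1, hz1⟩ | ⟨hind1, w1, hw1, hz1⟩
            · injection hz1 with h1 h2
              subst h1; subst h2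
              refine ⟨a0 :: u0, a :: b1 :: v1, TrEq.refl _, TrEq.refl _, ?_⟩
              refine rconc_cons_left a0 (rconc_cons_right (fun c hc => ?_) hw1)
              exact hind c (by simp [hc]) a (by simp)
            · injection hz1 with h1 h2
              subst h1; subst h2
              refine ⟨a0 :: u0, b :: a :: v1, TrEq.refl _, TrEq.swap [] v1 hab, ?_⟩
              refine rconc_cons_right (fun c hc => hind1 c hc b (by simp)) ?_
              exact rconc_cons_right (fun c hc => hind c hc a (by simp)) hw1
  | cons c x ih =>
    intro u v y h
    cases u with
    | nil =>
      rw [rconc_nil_left] at h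
      refine ⟨[], c :: x ++ b :: a :: y, TrEq.refl _, ?_, by rw [rconc_nil_left]; rfl⟩
      rw [← h]
      simpa using TrEq.swap (c :: x) y hab
    | cons a0 u0 =>
      cases v with
      | nil =>
        rw [rconc_nil_right] at h
        refine ⟨c :: x ++ b :: a :: y, [], ?_, TrEq.refl _, by rw [rconc_nil_right]; rfl⟩
        rw [← h]
        simpa using TrEq.swap (c :: x) y hab
      | cons b0 v0 =>
        rw [rconc] at h
        rcases h with ⟨w, hw, hz⟩ | ⟨hind, w, hw, hz⟩
        · injection hz with h1 h2
          subst h1; subst h2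
          obtain ⟨u', v', hu, hv, hm⟩ := ih hw
          exact ⟨a0 :: u', v', treq_cons a0 hu, hv, rconc_cons_left a0 hm⟩
        · simp only [Set.mem_setOf_eq, List.cons_append, List.cons.injEq] at hz
          obtain ⟨rfl, rfl⟩ := hz
          obtain ⟨u', v', hu, hv, hm⟩ := ih hw
          refine ⟨u', c :: v', hu, treq_cons c hv, ?_⟩
          refine rconc_cons_right (fun d hd => ?_) hm
          have : d ∈ a0 :: u0 := (treq_perm hu).symm.mem_iff.mp hd
          exact hind d this c (by simp)

theorem rconc_treq_closed (hsym : Symmetric I) {z z' : List α} (h : TrEq I z z') :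
    (∀ u v, z ∈ rconc I u v →
      ∃ u' v', TrEq I u u' ∧ TrEq I v v' ∧ z' ∈ rconc I u' v') ∧
    (∀ u v, z' ∈ rconc I u v →
      ∃ u' v', TrEq I u u' ∧ TrEq I v v' ∧ z ∈ rconc I u' v') := by
  induction h with
  | swap x y hab =>
    constructor
    · intro u v hm
      have := rconc_swap hab x (u := u) (v := v) (y := y) (by simpa using hm)
      simpa using this
    · intro u v hm
      have := rconc_swap (hsym hab) x (by simpa using hm)
      simpa using this
  | refl w => exact ⟨fun u v hm => ⟨u, v, TrEq.refl _, TrEq.refl _, hm⟩,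
      fun u v hm => ⟨u, v, TrEq.refl _, TrEq.refl _, hm⟩⟩
  | symm _ ih => exact ⟨ih.2, ih.1⟩
  | trans _ _ ih1 ih2 =>
    constructor
    · intro u v hm
      obtain ⟨u', v', hu, hv, hm'⟩ := ih1.1 u v hm
      obtain ⟨u'', v'', hu', hv', hm''⟩ := ih2.1 u' v' hm'
      exact ⟨u'', v'', hu.trans hu', hv.trans hv', hm''⟩
    · intro u v hm
      obtain ⟨u', v', hu, hv, hm'⟩ := ih2.2 u v hm
      obtain ⟨u'', v'', hu', hv', hm''⟩ := ih1.2 u' v' hm'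
      exact ⟨u'', v'', hu.trans hu', hv.trans hv', hm''⟩

theorem mem_trClosure_of (hz : TrEq I w z) (h : z ∈ TrClosure I L) : w ∈ TrClosure I L := by
  obtain ⟨z0, hz0, h0⟩ := h
  exact ⟨z0, hz0, hz.trans h0⟩

theorem subset_trClosure (L : Set (List α)) : L ⊆ TrClosure I L :=
  fun w hw => ⟨w, hw, TrEq.refl _⟩

theorem trClosure_min {L S : Set (List α)} (hLS : L ⊆ S)
    (hS : ∀ z ∈ S, ∀ w, TrEq I w z → w ∈ S) : TrClosure I L ⊆ S := by
  rintro w ⟨z, hz, hwz⟩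
  exact hS z (hLS hz) w hwz

theorem rconcL_trcl (hsym : Symmetric I) (A B : Language α) :
    rconcL I (TrClosure I A) (TrClosure I B) = TrClosure I (A * B) := by
  apply Set.Subset.antisymm
  · rintro z ⟨u, ⟨u0, hu0, hu⟩, v, ⟨v0, hv0, hv⟩, hz⟩
    refine ⟨u0 ++ v0, Language.append_mem_mul hu0 hv0, ?_⟩
    exact (rconc_treq hsym u v z hz).trans (treq_append hu hv)
  · refine trClosure_min ?_ ?_
    · rintro z hz
      replace hz : z ∈ (A * B : Language α) := hz
      rw [Language.mem_mul] at hz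
      obtain ⟨u, hu, v, hv, rfl⟩ := hz
      exact ⟨u, subset_trClosure A hu, v, subset_trClosure B hv, append_mem_rconc u v⟩
    · rintro z ⟨u, hu, v, hv, hz⟩ w hwz
      obtain ⟨u', v', hu', hv', hm⟩ := (rconc_treq_closed hsym hwz).2 u v hz
      exact ⟨u', mem_trClosure_of hu'.symm hu, v', mem_trClosure_of hv'.symm hv, hm⟩

theorem rconcL_mono {L X Y : Set (List α)} (h : X ⊆ Y) : rconcL I L X ⊆ rconcL I L Y := by
  rintro z ⟨u, hu, v, hv, hz⟩
  exact ⟨u, hu, v, h hv, hz⟩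

theorem starI_le {L X : Set (List α)} (h : {([] : List α)} ∪ rconcL I L X ⊆ X) :
    starI I L ⊆ X :=
  sInf_le h

theorem starI_prefixed (L : Set (List α)) :
    {([] : List α)} ∪ rconcL I L (starI I L) ⊆ starI I L := by
  intro z hz
  rw [starI, Set.sInf_eq_sInter, Set.mem_sInter]
  intro X hX
  rcases hz with hz | hz
  · exact hX (Or.inl hz)
  · refine hX (Or.inr ?_)
    exact rconcL_mono (starI_le hX) hz

theorem nil_mem_starI (L : Set (List α)) : [] ∈ starI I L :=
  starI_prefixed L (Or.inl rfl)

theorem rconcL_starI {L : Set (List α)} : rconcL I L (starI I L) ⊆ starI I L :=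
  fun z hz => starI_prefixed L (Or.inr hz)

theorem starI_closed (hsym : Symmetric I)
    {L : Set (List α)} (hL : ∀ z ∈ L, ∀ w, TrEq I w z → w ∈ L) :
    ∀ z ∈ starI I L, ∀ w, TrEq I w z → w ∈ starI I L := by
  set K : Set (List α) := {z | ∀ w, TrEq I w z → w ∈ starI I L} with hK
  have hKsub : K ⊆ starI I L := fun z hz => hz z (TrEq.refl _)
  have hpre : {([] : List α)} ∪ rconcL I L K ⊆ K := by
    rintro z (hz | ⟨u, hu, v, hv, hz⟩)
    · rw [Set.mem_singleton_iff] at hz; subst hz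
      intro w hw
      rw [treq_nil hw]
      exact nil_mem_starI L
    · intro w hw
      obtain ⟨u', v', hu', hv', hm⟩ := (rconc_treq_closed hsym hw).2 u v hz
      refine rconcL_starI ⟨u', hL u hu u' hu'.symm, v', ?_, hm⟩
      refine hKsub ?_
      intro t ht
      exact hv t (ht.trans hv'.symm)
  have : starI I L ⊆ K := starI_le hpre
  exact fun z hz w hw => this hz w hw

theorem starI_trcl (hsym : Symmetric I) (M : Language α) :
    starI I (TrClosure I M) = TrClosure I ((M∗ : Language α)) := by
  apply Set.Subset.antisymm
  · refine starI_le ?_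
    rintro z (hz | ⟨u, ⟨u0, hu0, hu⟩, v, ⟨v0, hv0, hv⟩, hz⟩)
    · rw [Set.mem_singleton_iff] at hz; subst hz
      exact subset_trClosure _ (Language.nil_mem_kstar M)
    · refine ⟨u0 ++ v0, ?_, (rconc_treq hsym u v z hz).trans (treq_append hu hv)⟩
      replace hv0 : v0 ∈ (M∗ : Language α) := hv0
      rw [Language.mem_kstar] at hv0
      obtain ⟨Ls, rfl, hLs⟩ := hv0
      rw [show u0 ++ Ls.flatten = (u0 :: Ls).flatten from rfl]
      refine Language.join_mem_kstar ?_
      intro y hy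
      rcases List.mem_cons.mp hy with rfl | hy
      · exact hu0
      · exact hLs y hy
  · refine trClosure_min ?_ (starI_closed hsym ?_)
    · intro z hz
      replace hz : z ∈ (M∗ : Language α) := hz
      rw [Language.mem_kstar] at hz
      obtain ⟨Ls, rfl, hLs⟩ := hz
      induction Ls with
      | nil => exact nil_mem_starI _
      | cons u Ls ih =>
        refine rconcL_starI ⟨u, subset_trClosure _ (hLs u (by simp)), Ls.flatten,
          ih (fun y hy => hLs y (by simp [hy])), ?_⟩
        exact append_mem_rconc u Ls.flatten
    · rintro z ⟨z0, hz0, hz⟩ w hw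
      exact ⟨z0, hz0, hw.trans hz⟩

theorem langI_eq_trClosure (hsym : Symmetric I) (E : RegularExpression α) :
    langI I E = TrClosure I E.matches' := by
  induction E with
  | zero =>
    ext z
    simp only [langI, Set.mem_empty_iff_false, false_iff]
    rintro ⟨z0, hz0, _⟩
    exact Language.notMem_zero z0 hz0
  | epsilon =>
    ext z
    simp only [langI, Set.mem_singleton_iff]
    constructor
    · rintro rfl
      exact ⟨[], rfl, TrEq.refl _⟩
    · rintro ⟨z0, hz0, hz⟩
      have h0 : z0 = [] := hz0
      subst h0
      exact treq_nil hz
  | char a =>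
    ext z
    simp only [langI, Set.mem_singleton_iff]
    constructor
    · rintro rfl
      exact ⟨[a], rfl, TrEq.refl _⟩
    · rintro ⟨z0, hz0, hz⟩
      have h0 : z0 = [a] := hz0
      subst h0
      exact treq_singleton hz
  | plus E F ihE ihF =>
    ext z
    simp only [langI, Set.mem_union, ihE, ihF]
    constructor
    · rintro (⟨z0, hz0, hz⟩ | ⟨z0, hz0, hz⟩)
      · exact ⟨z0, (Language.mem_add _ _ _).mpr (Or.inl hz0), hz⟩
      · exact ⟨z0, (Language.mem_add _ _ _).mpr (Or.inr hz0), hz⟩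
    · rintro ⟨z0, hz0, hz⟩
      rcases (Language.mem_add _ _ _).mp hz0 with h0 | h0
      · exact Or.inl ⟨z0, h0, hz⟩
      · exact Or.inr ⟨z0, h0, hz⟩
  | comp E F ihE ihF =>
    show rconcL I (langI I E) (langI I F) = _
    rw [ihE, ihF, rconcL_trcl hsym]
    rfl
  | star E ih =>
    show starI I (langI I E) = _
    rw [ih, starI_trcl hsym, RegularExpression.matches'_star]
end Dev


/-- ⟦E⟧^I = [⟦E⟧]; in particular ⟦E⟧^I is trace closed. -/
theorem stmt3 {α : Type u} [Fintype α] (I : α → α → Prop)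
    (hirr : Irreflexive I) (hsym : Symmetric I) (E : RegularExpression α) :
    langI I E = TrClosure I E.matches' ∧
      ∀ w ∈ langI I E, ∀ z, TrEq I z w → z ∈ langI I E := by
  refine ⟨langI_eq_trClosure hsym E, ?_⟩
  rw [langI_eq_trClosure hsym E]
  rintro w ⟨z0, hz0, hw⟩ z hz
  exact ⟨z0, hz0, hz.trans hw⟩
end

section
/- Let Σ = {a, b} with a I b. Then the trace closure of the language of the regular expression (ab)✶ equals {u ∈ Σ* | the number of occurrences of a in u equals the number of occurrences of b in u}, and this language is not regular. Hence there exists a regular language whose trace closure is not regular. -/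
open RegularExpression
open scoped Classical
open scoped Computability

universe u

variable {α : Type u}

private theorem TrEq.count {I : Bool → Bool → Prop} {u v : List Bool}
    (h : TrEq I u v) (c : Bool) : u.count c = v.count c := by
  induction h with
  | swap x y hab => simp [List.count_append, List.count_cons]; omega
  | refl u => rfl
  | symm h ih => exact ih.symm
  | trans h1 h2 ih1 ih2 => exact ih1.trans ih2

private theorem TrEq.cons {I : Bool → Bool → Prop} {u v : List Bool}
    (h : TrEq I u v) (c : Bool) : TrEq I (c :: u) (c :: v) := by
  induction h with
  | swap x y hab =>
      exact TrEq.swap (_ :: x) _ hab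
  | refl u => exact TrEq.refl _
  | symm h ih => exact ih.symm
  | trans h1 h2 ih1 ih2 => exact ih1.trans ih2

private theorem treq_of_perm {I : Bool → Bool → Prop} (hI : ∀ x y, I x y ↔ x ≠ y)
    {u v : List Bool} (h : u.Perm v) : TrEq I u v := by
  induction h with
  | nil => exact TrEq.refl _
  | cons a h ih => exact ih.cons a
  | swap a b l =>
      by_cases hab : a = b
      · subst hab; exact TrEq.refl _
      · exact TrEq.swap [] l ((hI b a).2 (Ne.symm hab))
  | trans h1 h2 ih1 ih2 => exact ih1.trans ih2


/-- DFA for ({[false,true]})∗ : `some false` = start/accept, `some true` = after `false`,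
`none` = dead. -/
private def dfaFT : DFA Bool (Option Bool) where
  step s c :=
    match s, c with
    | some false, false => some true
    | some true, true => some false
    | _, _ => none
  start := some false
  accept := {some false}

private theorem dfaFT_dead : ∀ w : List Bool, dfaFT.evalFrom none w = none
  | [] => rfl
  | c :: w => by
      have : dfaFT.evalFrom none (c :: w) = dfaFT.evalFrom (dfaFT.step none c) w := rfl
      rw [this]
      have hc : dfaFT.step none c = none := by cases c <;> rfl
      rw [hc, dfaFT_dead w]

private theorem dfaFT_sound : ∀ w : List Bool,
    dfaFT.evalFrom (some false) w = some false → w ∈ ({[false, true]} : Language Bool)∗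
  | [] => fun _ => by
      rw [Language.mem_kstar]; exact ⟨[], rfl, by simp⟩
  | true :: w => fun h => by
      have : dfaFT.evalFrom (some false) (true :: w) = dfaFT.evalFrom none w := rfl
      rw [this, dfaFT_dead w] at h
      exact absurd h (by simp)
  | [false] => fun h => by
      exact absurd h (by simp [DFA.evalFrom, dfaFT])
  | false :: false :: w => fun h => by
      have : dfaFT.evalFrom (some false) (false :: false :: w) = dfaFT.evalFrom none w := rfl
      rw [this, dfaFT_dead w] at h
      exact absurd h (by simp)
  | false :: true :: w => fun h => by
      have hstep : dfaFT.evalFrom (some false) (false :: true :: w)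
          = dfaFT.evalFrom (some false) w := rfl
      rw [hstep] at h
      have hw := dfaFT_sound w h
      rw [Language.mem_kstar] at hw ⊢
      obtain ⟨S, rfl, hS⟩ := hw
      refine ⟨[false, true] :: S, rfl, ?_⟩
      intro y hy
      rcases List.mem_cons.1 hy with rfl | hy
      · rfl
      · exact hS y hy

private theorem dfaFT_complete : ∀ S : List (List Bool),
    (∀ y ∈ S, y = [false, true]) → dfaFT.evalFrom (some false) S.flatten = some false
  | [], _ => rfl
  | w :: S, hS => by
      have hw : w = [false, true] := hS w (by simp)
      subst hw
      have : dfaFT.evalFrom (some false) ([false, true] :: S).flatten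
          = dfaFT.evalFrom (some false) S.flatten := rfl
      rw [this]
      exact dfaFT_complete S (fun y hy => hS y (by simp [hy]))

private theorem dfaFT_accepts : dfaFT.accepts = ({[false, true]} : Language Bool)∗ := by
  ext w
  rw [DFA.mem_accepts]
  constructor
  · intro h
    exact dfaFT_sound w h
  · intro h
    rw [Language.mem_kstar] at h
    obtain ⟨S, rfl, hS⟩ := h
    show dfaFT.evalFrom (some false) S.flatten ∈ dfaFT.accept
    rw [dfaFT_complete S (fun y hy => hS y hy)]
    rfl

/-- over Σ = {a, b} with a I b, the trace closure of ⟦(ab)✶⟧ is the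
language of words with equally many a's and b's, which is not regular; hence there
is a regular language whose trace closure is not regular. -/
theorem stmt4 (I : Bool → Bool → Prop) (hI : ∀ x y, I x y ↔ x ≠ y)
    (E : RegularExpression Bool)
    (hE : E = RegularExpression.star (comp (char false) (char true))) :
    TrClosure I E.matches' = {u : List Bool | u.count false = u.count true} ∧
    ¬ Language.IsRegular (TrClosure I E.matches' : Language Bool) ∧
    ∃ L : Language Bool, L.IsRegular ∧
      ¬ Language.IsRegular (TrClosure I (L : Set (List Bool)) : Language Bool) := by
  subst hE
  have hL : (RegularExpression.star (comp (char false) (char true))).matches'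
      = ({[false, true]} : Language Bool)∗ := by
    have : ({[false]} : Language Bool) * {[true]} = {[false, true]} := by
      ext w
      simp only [Language.mem_mul, Set.mem_singleton_iff]
      constructor
      · rintro ⟨a, rfl, b, rfl, rfl⟩; rfl
      · rintro rfl; exact ⟨_, rfl, _, rfl, rfl⟩
    simp only [RegularExpression.matches'_star, RegularExpression.comp_def,
      RegularExpression.matches'_mul, RegularExpression.matches'_char, this]
  have hcount : ∀ z ∈ (RegularExpression.star (comp (char false) (char true))).matches',
      z.count false = z.count true := by
    intro z hz
    rw [hL] at hz
    rw [Language.mem_kstar] at hz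
    obtain ⟨S, rfl, hS⟩ := hz
    induction S with
    | nil => rfl
    | cons w S ih =>
        have hw : w = [false, true] := hS w (by simp)
        simp only [List.flatten_cons, List.count_append, hw]
        have := ih (fun y hy => hS y (by simp [hy]))
        simp [this]
  have hmain : TrClosure I (RegularExpression.star (comp (char false) (char true))).matches'
      = {u : List Bool | u.count false = u.count true} := by
    ext u
    constructor
    · rintro ⟨z, hz, heq⟩
      have := heq.count
      simp only [Set.mem_setOf_eq]
      rw [this false, this true]
      exact hcount z hz
    · intro hu
      simp only [Set.mem_setOf_eq] at hu
      set n := u.count true with hn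
      refine ⟨(List.replicate n [false, true]).flatten, ?_, ?_⟩
      · rw [hL]; show (List.replicate n [false, true]).flatten ∈ ({[false, true]} : Language Bool)∗; rw [Language.mem_kstar]
        exact ⟨List.replicate n [false, true], rfl, fun y hy => (List.eq_of_mem_replicate hy)⟩
      · apply treq_of_perm hI
        rw [List.perm_iff_count]
        intro c
        have hflat : ∀ c : Bool, (List.replicate n [false, true]).flatten.count c = n := by
          intro c
          induction n with
          | zero => rfl
          | succ m ih =>
              simp only [List.replicate_succ, List.flatten_cons, List.count_append, ih]
              cases c <;> simp <;> omega
        cases c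
        · rw [hflat false, ← hu]
        · rw [hflat true]
  have hnotreg : ¬ Language.IsRegular
      (TrClosure I (RegularExpression.star (comp (char false) (char true))).matches'
        : Language Bool) := by
    rw [show (TrClosure I (RegularExpression.star (comp (char false) (char true))).matches'
        : Language Bool) = ({u : List Bool | u.count false = u.count true} : Set (List Bool))
      from congrArg _ hmain]
    rintro ⟨σ, hfin, M, hM⟩
    obtain ⟨m, k, hmk, heq⟩ := Finite.exists_ne_map_eq_of_infinite
      (fun n : ℕ => M.eval (List.replicate n false))
    have hmem : ∀ p q : ℕ, (List.replicate p false ++ List.replicate q false.not) ∈ M.accepts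
        ↔ p = q := by
      intro p q
      rw [hM]
      show (_ ∈ ({u : List Bool | u.count false = u.count true} : Set (List Bool))) ↔ _
      simp [List.count_append, List.count_replicate]
    have hev : ∀ p q : ℕ, M.eval (List.replicate p false ++ List.replicate q false.not)
        = M.evalFrom (M.eval (List.replicate p false)) (List.replicate q false.not) := by
      intro p q
      exact M.evalFrom_of_append _ _ _
    have h1 : (List.replicate m false ++ List.replicate m false.not) ∈ M.accepts :=
      (hmem m m).2 rfl
    have h2 : (List.replicate k false ++ List.replicate m false.not) ∈ M.accepts := by
      rw [DFA.mem_accepts, hev] at h1 ⊢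
      rwa [← heq]
    exact hmk ((hmem k m).1 h2).symm
  refine ⟨hmain, hnotreg,
    ⟨(RegularExpression.star (comp (char false) (char true))).matches', ?_, hnotreg⟩⟩
  exact ⟨Option Bool, inferInstance, dfaFT, by rw [dfaFT_accepts, hL]⟩
end
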